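/- Let z₁, z₂ be real numbers with 1 < z₁ < z₂, let k₁ be a real number that is not a nonnegative integer, let k₂ be real, let M₁ ∈ ℂ with M₁ ≠ 0 and M₂ ∈ ℂ, and define c_n = M₁ · γ_n(k₁) · (−1/z₁)^n + M₂ · γ_n(k₂) · (−1/z₂)^n for n ∈ ℕ (the Taylor coefficients of f(z) = M₁(1 − z/z₁)^{k₁} + M₂(1 − z/z₂)^{k₂}). Then: (a) c_n ≠ 0 for all sufficiently large n; (b) the ratio R_n = c_{n+1}/c_n satisfies lim_{n→∞} R_n = 1/z₁; and (c) the Domb–Sykes limit holds: lim_{n→∞} n · (1 − z₁ · R_n) = 1 + k₁. -/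

import Mathlib

/-- The generalized binomial coefficient γ_n(k) = k(k−1)⋯(k−n+1)/n!, with γ_0(k) = 1. -/
noncomputable def genBinom (k : ℂ) (n : ℕ) : ℂ :=
  (∏ i ∈ Finset.range n, (k - i)) / (n.factorial : ℂ)

open Filter

lemma genBinom_succ (k : ℂ) (n : ℕ) :
    genBinom k (n + 1) = genBinom k n * (k - n) / (n + 1) := by
  unfold genBinom
  rw [Finset.prod_range_succ, div_mul_eq_mul_div, div_div]
  congr 1
  push_cast [Nat.factorial_succ]
  ring

lemma genBinom_ne_zero {k : ℝ} (hk : ∀ m : ℕ, k ≠ (m : ℝ)) (n : ℕ) :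
    genBinom (k : ℂ) n ≠ 0 := by
  have h1 : ((n.factorial : ℂ)) ≠ 0 := by exact_mod_cast n.factorial_ne_zero
  refine div_ne_zero ?_ h1
  refine Finset.prod_ne_zero_iff.2 fun i _ => ?_
  intro h
  apply hk i
  have : (k : ℂ) = (i : ℂ) := by linear_combination h
  exact_mod_cast this

lemma aux_inv_add_one (w : ℂ) :
    Tendsto (fun n : ℕ => ((n : ℂ) + w)⁻¹) atTop (nhds 0) := by
  rw [tendsto_zero_iff_norm_tendsto_zero]
  have h1 : Tendsto (fun n : ℕ => ((n : ℝ) - ‖w‖)) atTop atTop :=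
    tendsto_atTop_add_const_right _ _ tendsto_natCast_atTop_atTop
  have h2 : Tendsto (fun n : ℕ => ‖((n : ℂ) + w)‖) atTop atTop := by
    apply tendsto_atTop_mono _ h1
    intro n
    calc (n : ℝ) - ‖w‖ = ‖((n:ℂ))‖ - ‖-w‖ := by simp [Complex.norm_natCast]
    _ ≤ ‖((n:ℂ)) - (-w)‖ := norm_sub_norm_le _ _
    _ = ‖((n:ℂ) + w)‖ := by ring_nf
  simpa [norm_inv, Function.comp_def, Pi.inv_def] using h2.inv_tendsto_atTop

lemma aux_ratio_tendsto (w : ℂ) :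
    Tendsto (fun n : ℕ => ((n : ℂ) + w) / ((n : ℂ) + 1)) atTop (nhds 1) := by
  have h0 : Tendsto (fun n : ℕ => (1 : ℂ) + (w - 1) * ((n : ℂ) + 1)⁻¹) atTop (nhds 1) := by
    have := (tendsto_const_nhds (x := w - 1) (f := atTop (α := ℕ))).mul (aux_inv_add_one 1)
    simpa using (tendsto_const_nhds (x := (1:ℂ))).add this
  apply h0.congr
  intro n
  have h2 : ((n : ℂ) + 1) ≠ 0 := Nat.cast_add_one_ne_zero n
  field_simp
  ring

set_option maxHeartbeats 800000 in
/-- The Domb–Sykes asymptotics of §8, equations (27)–(28): for the Taylor coefficients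
c_n of f(z) = M₁(1 − z/z₁)^{k₁} + M₂(1 − z/z₂)^{k₂} with 1 < z₁ < z₂, k₁ not a
nonnegative integer and M₁ ≠ 0: (a) c_n ≠ 0 for all large n, (b) R_n = c_{n+1}/c_n → 1/z₁,
and (c) n(1 − z₁R_n) → 1 + k₁. -/
theorem stmt_17 (z₁ z₂ : ℝ) (h1 : 1 < z₁) (h12 : z₁ < z₂) (k₁ k₂ : ℝ)
    (hk₁ : ∀ m : ℕ, k₁ ≠ (m : ℝ)) (M₁ M₂ : ℂ) (hM₁ : M₁ ≠ 0) (c : ℕ → ℂ)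
    (hc : ∀ n : ℕ, c n = M₁ * genBinom (k₁ : ℂ) n * (-(1 / (z₁ : ℂ))) ^ n +
        M₂ * genBinom (k₂ : ℂ) n * (-(1 / (z₂ : ℂ))) ^ n) :
    (∃ N : ℕ, ∀ n ≥ N, c n ≠ 0) ∧
    Filter.Tendsto (fun n : ℕ => c (n + 1) / c n) Filter.atTop (nhds (1 / (z₁ : ℂ))) ∧
    Filter.Tendsto (fun n : ℕ => (n : ℂ) * (1 - (z₁ : ℂ) * (c (n + 1) / c n)))
      Filter.atTop (nhds (1 + (k₁ : ℂ))) := by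
  have hz₁0 : (0:ℝ) < z₁ := lt_trans one_pos h1
  have hz₂0 : (0:ℝ) < z₂ := lt_trans hz₁0 h12
  have hz₁C : (z₁:ℂ) ≠ 0 := by exact_mod_cast hz₁0.ne'
  have hz₂C : (z₂:ℂ) ≠ 0 := by exact_mod_cast hz₂0.ne'
  have hnegz₁ : (-(1/(z₁:ℂ))) ≠ 0 := by
    simp only [ne_eq, neg_eq_zero, one_div, inv_eq_zero]; exact hz₁C
  have hnegz₂ : (-(1/(z₂:ℂ))) ≠ 0 := by
    simp only [ne_eq, neg_eq_zero, one_div, inv_eq_zero]; exact hz₂C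
  set lam : ℝ := z₁ / z₂ with hlam
  have hlam0 : 0 < lam := div_pos hz₁0 hz₂0
  have hlam1 : lam < 1 := (div_lt_one hz₂0).2 h12
  have hg₁ : ∀ n : ℕ, genBinom (k₁:ℂ) n ≠ 0 := genBinom_ne_zero hk₁
  have hk₁n : ∀ n : ℕ, (k₁:ℂ) - n ≠ 0 := by
    intro n h
    apply hk₁ n
    have : (k₁ : ℂ) = (n : ℂ) := by linear_combination h
    exact_mod_cast this
  have hnp1 : ∀ n : ℕ, ((n:ℂ) + 1) ≠ 0 := fun n => Nat.cast_add_one_ne_zero n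
  set u : ℕ → ℂ := fun n => M₁ * genBinom (k₁:ℂ) n * (-(1/(z₁:ℂ)))^n with hu
  have hu0 : ∀ n, u n ≠ 0 := fun n =>
    mul_ne_zero (mul_ne_zero hM₁ (hg₁ n)) (pow_ne_zero _ hnegz₁)
  set d : ℕ → ℂ := fun n => (M₂ * genBinom (k₂:ℂ) n * (-(1/(z₂:ℂ)))^n) / u n with hd
  have hcud : ∀ n, c n = u n * (1 + d n) := by
    intro n
    rw [hc n, mul_add, mul_one, hd]
    rw [mul_div_cancel₀ _ (hu0 n)]
  have hrecu : ∀ n, u (n+1) = u n * (((k₁:ℂ) - n)/((n:ℂ)+1)) * (-(1/(z₁:ℂ))) := by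
    intro n
    simp only [hu, genBinom_succ, pow_succ]
    ring
  have hrecd : ∀ n, d (n+1) = d n * (((k₂:ℂ) - n)/((k₁:ℂ) - n)) * ((z₁:ℂ)/(z₂:ℂ)) := by
    intro n
    have hnum : M₂ * genBinom (k₂:ℂ) (n+1) * (-(1/(z₂:ℂ)))^(n+1)
        = (M₂ * genBinom (k₂:ℂ) n * (-(1/(z₂:ℂ)))^n)
          * (((k₂:ℂ) - n)/((n:ℂ)+1) * (-(1/(z₂:ℂ)))) := by
      rw [genBinom_succ, pow_succ]; ring
    simp only [hd]
    rw [hnum, hrecu n]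
    field_simp [hu0 n, hk₁n n, hnp1 n, hz₁C, hz₂C]
  clear_value u d
  set a : ℕ → ℂ := fun n => (n:ℂ) * d n with ha
  clear_value a
  have hlamnorm : ‖((z₁:ℂ)/(z₂:ℂ))‖ = lam := by
    rw [show ((z₁:ℂ)/(z₂:ℂ)) = ((lam : ℝ) : ℂ) by rw [hlam]; push_cast; ring]
    rw [Complex.norm_real, Real.norm_eq_abs, abs_of_pos hlam0]
  set T : ℕ → ℂ := fun n => ((k₂:ℂ) - n)/((k₁:ℂ) - n) with hT
  have hTnorm : Tendsto (fun n => ‖T n‖) atTop (nhds 1) := by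
    have hT1 : Tendsto T atTop (nhds 1) := by
      have h0 : Tendsto (fun n : ℕ => (1:ℂ) + ((k₂:ℂ) - k₁) * (-(((n:ℂ) + (-(k₁:ℂ)))⁻¹)))
          atTop (nhds 1) := by
        have := (tendsto_const_nhds (x := (k₂:ℂ) - k₁) (f := atTop (α := ℕ))).mul
          ((aux_inv_add_one (-(k₁:ℂ))).neg)
        simpa using (tendsto_const_nhds (x := (1:ℂ))).add this
      apply h0.congr
      intro n
      have h2 := hk₁n n
      have h3 : (n:ℂ) + (-(k₁:ℂ)) ≠ 0 := by
        intro h; apply h2; linear_combination -h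
      simp only [hT]
      field_simp
      ring
    simpa [Function.comp_def] using (continuous_norm.tendsto (1:ℂ)).comp hT1
  set r : ℝ := (1 + lam) / 2 with hr
  have hr1 : r < 1 := by rw [hr]; linarith
  have hlamr : lam < r := by rw [hr]; linarith
  have hphi : Tendsto (fun n : ℕ => (((n:ℝ)+1)/(n:ℝ)) * ‖T n‖ * lam) atTop (nhds lam) := by
    have hq : Tendsto (fun n : ℕ => ((n:ℝ)+1)/(n:ℝ)) atTop (nhds 1) := by
      have h0 : Tendsto (fun n : ℕ => 1 + 1/((n:ℝ))) atTop (nhds 1) := by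
        simpa using (tendsto_const_nhds (x := (1:ℝ))).add tendsto_one_div_atTop_nhds_zero_nat
      apply h0.congr'
      filter_upwards [eventually_ge_atTop 1] with n hn
      have hn0 : (n:ℝ) ≠ 0 := by positivity
      field_simp
    have := (hq.mul hTnorm).mul (tendsto_const_nhds (x := lam))
    simpa using this
  have hratio : ∀ᶠ n in atTop, ‖a (n+1)‖ ≤ r * ‖a n‖ := by
    have hev : ∀ᶠ n : ℕ in atTop, (((n:ℝ)+1)/(n:ℝ)) * ‖T n‖ * lam ≤ r :=
      hphi.eventually (eventually_le_nhds hlamr)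
    filter_upwards [hev, eventually_ge_atTop 1] with n hn hn1
    have hnR : (0:ℝ) < (n:ℝ) := by exact_mod_cast hn1
    have e1 : ‖a (n+1)‖ = ((n:ℝ)+1) * (‖d n‖ * ‖T n‖ * lam) := by
      simp only [ha, hrecd n, norm_mul, Complex.norm_natCast, hlamnorm]
      push_cast
      ring
    have e2 : ‖a n‖ = (n:ℝ) * ‖d n‖ := by
      simp only [ha, norm_mul, Complex.norm_natCast]
    rw [e1, e2]
    calc ((n:ℝ)+1) * (‖d n‖ * ‖T n‖ * lam)
        = ((((n:ℝ)+1)/(n:ℝ)) * ‖T n‖ * lam) * ((n:ℝ) * ‖d n‖) := by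
          field_simp
      _ ≤ r * ((n:ℝ) * ‖d n‖) := mul_le_mul_of_nonneg_right hn (by positivity)
  have hasum : Summable a := summable_of_ratio_norm_eventually_le hr1 hratio
  have ha0 : Tendsto a atTop (nhds 0) := hasum.tendsto_atTop_zero
  have ha0' : Tendsto (fun n => a (n+1)) atTop (nhds 0) := ha0.comp (tendsto_add_atTop_nat 1)
  have hd0 : Tendsto d atTop (nhds 0) := by
    apply squeeze_zero_norm' (a := fun n => ‖a n‖)
    · filter_upwards [eventually_ge_atTop 1] with n hn
      have hnR : (1:ℝ) ≤ (n:ℝ) := by exact_mod_cast hn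
      have e2 : ‖a n‖ = (n:ℝ) * ‖d n‖ := by simp only [ha, norm_mul, Complex.norm_natCast]
      rw [e2]
      nlinarith [norm_nonneg (d n)]
    · simpa [Function.comp_def] using (continuous_norm.tendsto (0:ℂ)).comp ha0
  have hd0' : Tendsto (fun n => d (n+1)) atTop (nhds 0) := hd0.comp (tendsto_add_atTop_nat 1)
  have h1d : Tendsto (fun n => 1 + d n) atTop (nhds 1) := by
    simpa using (tendsto_const_nhds (x := (1:ℂ))).add hd0
  have h1d' : Tendsto (fun n => 1 + d (n+1)) atTop (nhds 1) := by
    simpa using (tendsto_const_nhds (x := (1:ℂ))).add hd0'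
  have hdne : ∀ᶠ n in atTop, (1 : ℂ) + d n ≠ 0 := h1d.eventually_ne one_ne_zero
  have hdne' : ∀ᶠ n in atTop, (1 : ℂ) + d (n+1) ≠ 0 := h1d'.eventually_ne one_ne_zero
  -- part (a)
  obtain ⟨N, hN⟩ := eventually_atTop.1 hdne
  have parta : ∃ N : ℕ, ∀ n ≥ N, c n ≠ 0 := by
    refine ⟨N, fun n hn => ?_⟩
    rw [hcud n]
    exact mul_ne_zero (hu0 n) (hN n hn)
  -- ratio limits
  have hQ : Tendsto (fun n : ℕ => ((n:ℂ) - k₁)/((n:ℂ)+1)) atTop (nhds 1) := by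
    simpa [sub_eq_add_neg] using aux_ratio_tendsto (-(k₁:ℂ))
  have hP : Tendsto (fun n : ℕ => (n:ℂ)/((n:ℂ)+1)) atTop (nhds 1) := by
    simpa using aux_ratio_tendsto 0
  -- part (b)
  have hR : ∀ n : ℕ, (1 + d n ≠ 0) → c (n+1) / c n
      = (((n:ℂ) - k₁)/((n:ℂ)+1)) * (1/(z₁:ℂ)) * ((1 + d (n+1))/(1 + d n)) := by
    intro n h
    rw [hcud, hcud, hrecu]
    rw [show u n * (((k₁:ℂ) - n)/((n:ℂ)+1)) * (-(1/(z₁:ℂ))) * (1 + d (n+1))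
        = u n * ((((k₁:ℂ) - n)/((n:ℂ)+1)) * (-(1/(z₁:ℂ))) * (1 + d (n+1))) from by ring]
    rw [mul_div_mul_left _ _ (hu0 n)]
    field_simp [h, hnp1 n, hz₁C]
    ring
  have hRform : ∀ᶠ n : ℕ in atTop, c (n+1) / c n
      = (((n:ℂ) - k₁)/((n:ℂ)+1)) * (1/(z₁:ℂ)) * ((1 + d (n+1))/(1 + d n)) := by
    filter_upwards [hdne] with n h
    exact hR n h
  have partb : Tendsto (fun n : ℕ => c (n+1)/c n) atTop (nhds (1/(z₁:ℂ))) := by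
    have hB : Tendsto (fun n => (1 + d (n+1))/(1 + d n)) atTop (nhds 1) := by
      simpa [Pi.div_def] using h1d'.div h1d one_ne_zero
    have hall := (hQ.mul (tendsto_const_nhds (x := 1/(z₁:ℂ)))).mul hB
    refine Tendsto.congr' (hRform.mono fun n h => h.symm) (by simpa using hall)
  -- part (c)
  have hform : ∀ᶠ n : ℕ in atTop, (n:ℂ) * (1 - (z₁:ℂ) * (c (n+1)/c n))
      = ((n:ℂ)/((n:ℂ)+1) * (1 + (k₁:ℂ)) + a n
          - (((n:ℂ) - k₁)/((n:ℂ)+1)) * ((n:ℂ)/((n:ℂ)+1)) * a (n+1)) / (1 + d n) := by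
    filter_upwards [hdne] with n h
    rw [hR n h]
    simp only [ha]
    push_cast
    field_simp [hnp1 n, hz₁C, h]
    ring
  have partc : Tendsto (fun n : ℕ => (n:ℂ) * (1 - (z₁:ℂ) * (c (n+1)/c n))) atTop
      (nhds (1 + (k₁:ℂ))) := by
    have hnum : Tendsto (fun n : ℕ => (n:ℂ)/((n:ℂ)+1) * (1 + (k₁:ℂ)) + a n
        - (((n:ℂ) - k₁)/((n:ℂ)+1)) * ((n:ℂ)/((n:ℂ)+1)) * a (n+1)) atTop (nhds (1 + (k₁:ℂ))) := by
      have := ((hP.mul (tendsto_const_nhds (x := 1 + (k₁:ℂ)))).add ha0).sub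
        (((hQ.mul hP)).mul ha0')
      simpa using this
    have hall := hnum.div h1d one_ne_zero
    refine Tendsto.congr' (hform.mono fun n h => h.symm) (by simpa [Pi.div_def] using hall)
  exact ⟨parta, partb, partc⟩
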